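/- arXiv:2504.15753 — 6 statements merged into one kernel-verified Lean document; each statement's English description precedes it below -/
import Mathlib

section
/- Let t0 < t1 and ω > 0 be real numbers, T := t1 − t0, and x, y ∈ ℝ. The infimum of ∫_{t0}^{t1} ( (1/4) z'(τ)² + (1/4) ω² z(τ)² ) dτ over all continuously differentiable functions z : [t0,t1] → ℝ with z(t0) = x and z(t1) = y equals ( ω(x² + y²) cosh(ωT) − 2ω x y ) / ( 4 sinh(ωT) ). -/
open MeasureTheory Real

namespace Stmt1Aux

variable (t0 t1 ω x y : ℝ)

/-- The optimal trajectory. -/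
noncomputable def zs (τ : ℝ) : ℝ :=
  (x * Real.sinh (ω * (t1 - τ)) + y * Real.sinh (ω * (τ - t0))) / Real.sinh (ω * (t1 - t0))

/-- Its derivative. -/
noncomputable def zsd (τ : ℝ) : ℝ :=
  (-(ω * x) * Real.cosh (ω * (t1 - τ)) + (ω * y) * Real.cosh (ω * (τ - t0))) /
    Real.sinh (ω * (t1 - t0))

lemma aff1 (τ : ℝ) : HasDerivAt (fun τ : ℝ => ω * (t1 - τ)) (-ω) τ := by
  simpa using ((hasDerivAt_id τ).const_sub t1).const_mul ω

lemma aff2 (τ : ℝ) : HasDerivAt (fun τ : ℝ => ω * (τ - t0)) ω τ := by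
  simpa using ((hasDerivAt_id τ).sub_const t0).const_mul ω

lemma hasDerivAt_zs (τ : ℝ) : HasDerivAt (zs t0 t1 ω x y) (zsd t0 t1 ω x y τ) τ := by
  have h1 : HasDerivAt (fun τ : ℝ => Real.sinh (ω * (t1 - τ)))
      (Real.cosh (ω * (t1 - τ)) * (-ω)) τ :=
    (Real.hasDerivAt_sinh _).comp τ (aff1 t1 ω τ)
  have h2 : HasDerivAt (fun τ : ℝ => Real.sinh (ω * (τ - t0)))
      (Real.cosh (ω * (τ - t0)) * ω) τ :=
    (Real.hasDerivAt_sinh _).comp τ (aff2 t0 ω τ)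
  have := (((h1.const_mul x).add (h2.const_mul y)).div_const (Real.sinh (ω * (t1 - t0))))
  refine this.congr_deriv ?_
  unfold zsd; ring

lemma hasDerivAt_zsd (τ : ℝ) :
    HasDerivAt (zsd t0 t1 ω x y) (ω ^ 2 * zs t0 t1 ω x y τ) τ := by
  have h1 : HasDerivAt (fun τ : ℝ => Real.cosh (ω * (t1 - τ)))
      (Real.sinh (ω * (t1 - τ)) * (-ω)) τ :=
    (Real.hasDerivAt_cosh _).comp τ (aff1 t1 ω τ)
  have h2 : HasDerivAt (fun τ : ℝ => Real.cosh (ω * (τ - t0)))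
      (Real.sinh (ω * (τ - t0)) * ω) τ :=
    (Real.hasDerivAt_cosh _).comp τ (aff2 t0 ω τ)
  have := (((h1.const_mul (-(ω * x))).add (h2.const_mul (ω * y))).div_const
      (Real.sinh (ω * (t1 - t0))))
  refine this.congr_deriv ?_
  unfold zs; ring

lemma continuous_zs : Continuous (zs t0 t1 ω x y) := by
  have hd : Differentiable ℝ (zs t0 t1 ω x y) :=
    fun τ => (hasDerivAt_zs t0 t1 ω x y τ).differentiableAt
  exact hd.continuous

lemma continuous_zsd : Continuous (zsd t0 t1 ω x y) := by
  have hd : Differentiable ℝ (zsd t0 t1 ω x y) :=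
    fun τ => (hasDerivAt_zsd t0 t1 ω x y τ).differentiableAt
  exact hd.continuous

lemma contDiff_zs : ContDiff ℝ 1 (zs t0 t1 ω x y) := by
  unfold zs
  apply ContDiff.div_const
  apply ContDiff.add
  · exact contDiff_const.mul
      (Real.contDiff_sinh.comp (contDiff_const.mul (contDiff_const.sub contDiff_id)))
  · exact contDiff_const.mul
      (Real.contDiff_sinh.comp (contDiff_const.mul (contDiff_id.sub contDiff_const)))

lemma deriv_zs : deriv (zs t0 t1 ω x y) = zsd t0 t1 ω x y :=
  funext fun τ => (hasDerivAt_zs t0 t1 ω x y τ).deriv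

variable {t0 t1 ω}

lemma zs_t0 (h : t0 < t1) (hω : 0 < ω) : zs t0 t1 ω x y t0 = x := by
  have hS : Real.sinh (ω * (t1 - t0)) ≠ 0 :=
    (Real.sinh_pos_iff.mpr (by nlinarith)).ne'
  unfold zs
  rw [sub_self, mul_zero, Real.sinh_zero]
  field_simp
  ring

lemma zs_t1 (h : t0 < t1) (hω : 0 < ω) : zs t0 t1 ω x y t1 = y := by
  have hS : Real.sinh (ω * (t1 - t0)) ≠ 0 :=
    (Real.sinh_pos_iff.mpr (by nlinarith)).ne'
  unfold zs
  rw [sub_self, mul_zero, Real.sinh_zero]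
  field_simp
  ring

/-- Boundary evaluation of the key quantity. -/
lemma boundary_val (h : t0 < t1) (hω : 0 < ω) :
    (1/4 : ℝ) * (y * zsd t0 t1 ω x y t1)
      - (1/4) * (x * zsd t0 t1 ω x y t0)
    = (ω * (x^2 + y^2) * Real.cosh (ω * (t1 - t0)) - 2 * ω * x * y)
        / (4 * Real.sinh (ω * (t1 - t0))) := by
  have hS : Real.sinh (ω * (t1 - t0)) ≠ 0 :=
    (Real.sinh_pos_iff.mpr (by nlinarith)).ne'
  unfold zsd
  rw [sub_self, mul_zero, Real.cosh_zero]
  have h2 : Real.cosh (ω * (t1 - t0)) ^ 2 - Real.sinh (ω * (t1 - t0)) ^ 2 = 1 := by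
    rw [Real.cosh_sq]; ring
  field_simp
  simp only [sub_self, mul_zero, Real.cosh_zero]
  nlinarith [h2]

/-- The value of the functional at the minimizer. -/
lemma value_at_zs (h : t0 < t1) (hω : 0 < ω) :
    (∫ τ in t0..t1, ((1/4) * (deriv (zs t0 t1 ω x y) τ)^2
        + (1/4) * ω^2 * (zs t0 t1 ω x y τ)^2))
    = (ω * (x^2 + y^2) * Real.cosh (ω * (t1 - t0)) - 2 * ω * x * y)
        / (4 * Real.sinh (ω * (t1 - t0))) := by
  rw [deriv_zs]
  have hG : ∀ τ ∈ Set.uIcc t0 t1,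
      HasDerivAt (fun τ => (1/4 : ℝ) * (zs t0 t1 ω x y τ * zsd t0 t1 ω x y τ))
        ((1/4) * (zsd t0 t1 ω x y τ)^2 + (1/4) * ω^2 * (zs t0 t1 ω x y τ)^2) τ := by
    intro τ _
    have := ((hasDerivAt_zs t0 t1 ω x y τ).mul (hasDerivAt_zsd t0 t1 ω x y τ)).const_mul
      (1/4 : ℝ)
    refine this.congr_deriv ?_
    ring
  have hint : IntervalIntegrable
      (fun τ => (1/4 : ℝ) * (zsd t0 t1 ω x y τ)^2 + (1/4) * ω^2 * (zs t0 t1 ω x y τ)^2)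
      volume t0 t1 := by
    apply Continuous.intervalIntegrable
    have h1 := continuous_zs t0 t1 ω x y
    have h2 := continuous_zsd t0 t1 ω x y
    fun_prop
  rw [intervalIntegral.integral_eq_sub_of_hasDerivAt hG hint]
  rw [zs_t0 x y h hω, zs_t1 x y h hω]
  exact boundary_val x y h hω

/-- The lower bound. -/
lemma lower_bound (h : t0 < t1) (hω : 0 < ω) (z : ℝ → ℝ) (hz : ContDiff ℝ 1 z)
    (hz0 : z t0 = x) (hz1 : z t1 = y) :
    (ω * (x^2 + y^2) * Real.cosh (ω * (t1 - t0)) - 2 * ω * x * y)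
        / (4 * Real.sinh (ω * (t1 - t0)))
    ≤ ∫ τ in t0..t1, ((1/4) * (deriv z τ)^2 + (1/4) * ω^2 * (z τ)^2) := by
  set Z := zs t0 t1 ω x y with hZ
  set Zd := zsd t0 t1 ω x y with hZd
  have hzd : ∀ τ, HasDerivAt z (deriv z τ) τ := fun τ =>
    ((hz.differentiable one_ne_zero) τ).hasDerivAt
  have hcz : Continuous z := hz.continuous
  have hczd : Continuous (deriv z) := hz.continuous_deriv le_rfl
  have hcZ : Continuous Z := continuous_zs t0 t1 ω x y
  have hcZd : Continuous Zd := continuous_zsd t0 t1 ω x y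
  -- the nonnegative remainder
  set Q : ℝ → ℝ := fun τ => (1/4) * (deriv z τ - Zd τ)^2 + (1/4) * ω^2 * (z τ - Z τ)^2
    with hQ
  have hcQ : Continuous Q := by fun_prop
  -- the exact part
  have hG : ∀ τ ∈ Set.uIcc t0 t1,
      HasDerivAt (fun τ => (1/4 : ℝ) * (Z τ * Zd τ) + (1/2) * (Zd τ * (z τ - Z τ)))
        (((1/4) * (deriv z τ)^2 + (1/4) * ω^2 * (z τ)^2) - Q τ) τ := by
    intro τ _
    have h1 := ((hasDerivAt_zs t0 t1 ω x y τ).mul (hasDerivAt_zsd t0 t1 ω x y τ)).const_mul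
      (1/4 : ℝ)
    have h2 := ((hasDerivAt_zsd t0 t1 ω x y τ).mul ((hzd τ).sub
      (hasDerivAt_zs t0 t1 ω x y τ))).const_mul (1/2 : ℝ)
    have := h1.add h2
    refine this.congr_deriv ?_
    simp only [hQ, hZ, hZd, Pi.sub_apply]
    ring
  have hintG : IntervalIntegrable
      (fun τ => ((1/4 : ℝ) * (deriv z τ)^2 + (1/4) * ω^2 * (z τ)^2) - Q τ)
      volume t0 t1 := by
    apply Continuous.intervalIntegrable
    fun_prop
  have hintQ : IntervalIntegrable Q volume t0 t1 := hcQ.intervalIntegrable _ _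
  have hsplit : (∫ τ in t0..t1, ((1/4 : ℝ) * (deriv z τ)^2 + (1/4) * ω^2 * (z τ)^2))
      = (∫ τ in t0..t1, (((1/4 : ℝ) * (deriv z τ)^2 + (1/4) * ω^2 * (z τ)^2) - Q τ))
        + ∫ τ in t0..t1, Q τ := by
    rw [← intervalIntegral.integral_add hintG hintQ]
    congr 1
    funext τ
    ring
  have hQnn : (0 : ℝ) ≤ ∫ τ in t0..t1, Q τ := by
    apply intervalIntegral.integral_nonneg h.le
    intro u _
    simp only [hQ]
    positivity
  rw [hsplit, intervalIntegral.integral_eq_sub_of_hasDerivAt hG hintG]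
  have hbd : (1/4 : ℝ) * (Z t1 * Zd t1) + (1/2) * (Zd t1 * (z t1 - Z t1))
      - ((1/4) * (Z t0 * Zd t0) + (1/2) * (Zd t0 * (z t0 - Z t0)))
      = (ω * (x^2 + y^2) * Real.cosh (ω * (t1 - t0)) - 2 * ω * x * y)
        / (4 * Real.sinh (ω * (t1 - t0))) := by
    rw [hz0, hz1, hZ, hZd, zs_t0 x y h hω, zs_t1 x y h hω, sub_self, sub_self,
      mul_zero, mul_zero, mul_zero, mul_zero, add_zero, add_zero]
    exact boundary_val x y h hω
  linarith [hbd, hQnn]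

end Stmt1Aux

/-- The infimum of `∫ ((1/4) z'² + (1/4) ω² z²)` over C¹ functions joining `x` to `y`
on `[t0, t1]` equals `(ω(x² + y²)cosh(ωT) − 2ωxy)/(4 sinh(ωT))`, where `T = t1 - t0`. -/
theorem stmt_1 (t0 t1 ω : ℝ) (h : t0 < t1) (hω : 0 < ω) (x y : ℝ) :
    sInf {E : ℝ | ∃ z : ℝ → ℝ, ContDiff ℝ 1 z ∧ z t0 = x ∧ z t1 = y ∧
        E = ∫ τ in t0..t1, ((1/4) * (deriv z τ)^2 + (1/4) * ω^2 * (z τ)^2)}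
      = (ω * (x^2 + y^2) * Real.cosh (ω * (t1 - t0)) - 2 * ω * x * y)
          / (4 * Real.sinh (ω * (t1 - t0))) := by
  apply IsLeast.csInf_eq
  constructor
  · exact ⟨Stmt1Aux.zs t0 t1 ω x y, Stmt1Aux.contDiff_zs t0 t1 ω x y,
      Stmt1Aux.zs_t0 x y h hω, Stmt1Aux.zs_t1 x y h hω,
      (Stmt1Aux.value_at_zs x y h hω).symm⟩
  · rintro E ⟨z, hz, hz0, hz1, rfl⟩
    exact Stmt1Aux.lower_bound x y h hω z hz hz0 hz1
end

section
/- (Completion-of-squares identity in Proposition 1.) Let t0 < t1, and let A : [t0,t1] → ℝ^{n×n}, B̂ : [t0,t1] → ℝ^{n×m}, Q : [t0,t1] → ℝ^{n×n} be continuous with Q(τ) symmetric for every τ. Let K : [t0,t1] → ℝ^{n×n} be differentiable with K(τ) symmetric for every τ, satisfying the Riccati matrix ODE K'(τ) = −A(τ)ᵀK(τ) − K(τ)A(τ) + K(τ)B̂(τ)B̂(τ)ᵀK(τ) − Q(τ) on [t0,t1] and the terminal condition K(t1) = K1. Let z : [t0,t1] → ℝⁿ be continuously differentiable and u : [t0,t1]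 → ℝᵐ continuous with z'(τ) = A(τ)z(τ) + B̂(τ)u(τ) for all τ, z(t0) = x and z(t1) = y. Define v(τ) := u(τ) + B̂(τ)ᵀK(τ)z(τ). Then ∫_{t0}^{t1} ( (1/2)|u(τ)|² + (1/2) z(τ)ᵀQ(τ)z(τ) ) dτ = ∫_{t0}^{t1} (1/2)|v(τ)|² dτ + (1/2) xᵀK(t0)x − (1/2) yᵀK1 y. -/
open MeasureTheory Matrix

attribute [local instance] Matrix.normedAddCommGroup Matrix.normedSpace

private lemma hdw_mulVec {n m : ℕ} {K : ℝ → Matrix (Fin n) (Fin m) ℝ}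
    {K' : Matrix (Fin n) (Fin m) ℝ} {z : ℝ → Fin m → ℝ} {z' : Fin m → ℝ}
    {s : Set ℝ} {τ : ℝ} (hK : HasDerivWithinAt K K' s τ)
    (hz : HasDerivWithinAt z z' s τ) :
    HasDerivWithinAt (fun t => K t *ᵥ z t) (K' *ᵥ z τ + K τ *ᵥ z') s τ := by
  rw [hasDerivWithinAt_pi]
  intro i
  simp only [mulVec, dotProduct, Pi.add_apply]
  rw [← Finset.sum_add_distrib]
  exact HasDerivWithinAt.fun_sum fun j _ =>
    ((hasDerivWithinAt_pi.1 (hasDerivWithinAt_pi.1 hK i) j).mul (hasDerivWithinAt_pi.1 hz j))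

private lemma hdw_dot {m : ℕ} {a b : ℝ → Fin m → ℝ} {a' b' : Fin m → ℝ}
    {s : Set ℝ} {τ : ℝ} (ha : HasDerivWithinAt a a' s τ) (hb : HasDerivWithinAt b b' s τ) :
    HasDerivWithinAt (fun t => a t ⬝ᵥ b t) (a' ⬝ᵥ b τ + a τ ⬝ᵥ b') s τ := by
  simp only [dotProduct]
  rw [← Finset.sum_add_distrib]
  exact HasDerivWithinAt.fun_sum fun j _ =>
    ((hasDerivWithinAt_pi.1 ha j).mul (hasDerivWithinAt_pi.1 hb j))

private lemma dot_mulVec_eq {n m : ℕ} (v : Fin n → ℝ) (M : Matrix (Fin n) (Fin m) ℝ)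
    (w : Fin m → ℝ) : v ⬝ᵥ M *ᵥ w = (Mᵀ *ᵥ v) ⬝ᵥ w := by
  rw [dotProduct_mulVec, ← vecMul_transpose, transpose_transpose]

private lemma alg {n m : ℕ} (K A Q : Matrix (Fin n) (Fin n) ℝ) (B : Matrix (Fin n) (Fin m) ℝ)
    (z : Fin n → ℝ) (u : Fin m → ℝ) (hKs : K.IsSymm) :
    (1/2 : ℝ) * ((A *ᵥ z + B *ᵥ u) ⬝ᵥ K *ᵥ z
      + z ⬝ᵥ ((-Aᵀ * K - K * A + K * B * Bᵀ * K - Q) *ᵥ z + K *ᵥ (A *ᵥ z + B *ᵥ u)))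
    = 1/2 * ((u + Bᵀ *ᵥ (K *ᵥ z)) ⬝ᵥ (u + Bᵀ *ᵥ (K *ᵥ z)))
      - (1/2 * (u ⬝ᵥ u) + 1/2 * (z ⬝ᵥ Q *ᵥ z)) := by
  have hK : Kᵀ = K := hKs
  simp only [Matrix.mulVec_add, Matrix.add_mulVec, Matrix.sub_mulVec, Matrix.neg_mulVec,
    ← Matrix.mulVec_mulVec, dotProduct_add, add_dotProduct, dotProduct_neg, neg_dotProduct,
    dotProduct_sub, sub_dotProduct]
  simp only [dot_mulVec_eq, hK, transpose_transpose]
  ring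

private lemma contOn_dot {m : ℕ} {a b : ℝ → Fin m → ℝ} {s : Set ℝ}
    (ha : ContinuousOn a s) (hb : ContinuousOn b s) :
    ContinuousOn (fun t => a t ⬝ᵥ b t) s := by
  simp only [dotProduct]
  exact continuousOn_finset_sum _ fun i _ =>
    ((continuous_apply i).comp_continuousOn ha).mul ((continuous_apply i).comp_continuousOn hb)

private lemma contOn_mulVec {n m : ℕ} {K : ℝ → Matrix (Fin n) (Fin m) ℝ} {z : ℝ → Fin m → ℝ}
    {s : Set ℝ} (hK : ContinuousOn K s) (hz : ContinuousOn z s) :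
    ContinuousOn (fun t => K t *ᵥ z t) s := by
  rw [continuousOn_pi]
  intro i
  simp only [mulVec, dotProduct]
  exact continuousOn_finset_sum _ fun j _ =>
    ((continuous_apply j).comp_continuousOn ((continuous_apply i).comp_continuousOn hK)).mul
      ((continuous_apply j).comp_continuousOn hz)

private lemma contOn_transpose {n m : ℕ} {B : ℝ → Matrix (Fin n) (Fin m) ℝ} {s : Set ℝ}
    (hB : ContinuousOn B s) : ContinuousOn (fun t => (B t)ᵀ) s := by
  exact (continuous_id.matrix_transpose).comp_continuousOn hB

/-- Completion-of-squares identity (Proposition 1): along any admissible pair `(z, u)` for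
the dynamics `z' = A z + B̂ u` with endpoints `x, y`, and with `K` a symmetric solution of
the Riccati matrix ODE with terminal condition `K(t1) = K1`, the quadratic cost equals
the transformed cost `∫ (1/2)|v|²` plus the boundary terms. -/
theorem stmt_3 (n m : ℕ) (t0 t1 : ℝ) (h : t0 < t1)
    (A Q : ℝ → Matrix (Fin n) (Fin n) ℝ) (B : ℝ → Matrix (Fin n) (Fin m) ℝ)
    (hA : ContinuousOn A (Set.Icc t0 t1)) (hB : ContinuousOn B (Set.Icc t0 t1))
    (hQ : ContinuousOn Q (Set.Icc t0 t1))
    (hQsymm : ∀ τ ∈ Set.Icc t0 t1, (Q τ).IsSymm)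
    (K : ℝ → Matrix (Fin n) (Fin n) ℝ) (K1 : Matrix (Fin n) (Fin n) ℝ)
    (hKsymm : ∀ τ ∈ Set.Icc t0 t1, (K τ).IsSymm)
    (hK : ∀ τ ∈ Set.Icc t0 t1,
      HasDerivWithinAt K
        (-(A τ)ᵀ * K τ - K τ * A τ + K τ * B τ * (B τ)ᵀ * K τ - Q τ)
        (Set.Icc t0 t1) τ)
    (hK1 : K t1 = K1)
    (x y : Fin n → ℝ) (z : ℝ → Fin n → ℝ) (u : ℝ → Fin m → ℝ)
    (hu : ContinuousOn u (Set.Icc t0 t1))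
    (hz : ∀ τ ∈ Set.Icc t0 t1,
      HasDerivWithinAt z (A τ *ᵥ z τ + B τ *ᵥ u τ) (Set.Icc t0 t1) τ)
    (hz0 : z t0 = x) (hz1 : z t1 = y)
    (v : ℝ → Fin m → ℝ)
    (hv : v = fun τ => u τ + (B τ)ᵀ *ᵥ (K τ *ᵥ z τ)) :
    (∫ τ in t0..t1, ((1/2) * (u τ ⬝ᵥ u τ) + (1/2) * (z τ ⬝ᵥ Q τ *ᵥ z τ)))
      = (∫ τ in t0..t1, (1/2) * (v τ ⬝ᵥ v τ))
        + (1/2) * (x ⬝ᵥ K t0 *ᵥ x) - (1/2) * (y ⬝ᵥ K1 *ᵥ y) := by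
  set s := Set.Icc t0 t1 with hs
  set F : ℝ → ℝ := fun τ => (1/2 : ℝ) * (z τ ⬝ᵥ K τ *ᵥ z τ) with hF
  set Eu : ℝ → ℝ := fun τ => (1/2) * (u τ ⬝ᵥ u τ) + (1/2) * (z τ ⬝ᵥ Q τ *ᵥ z τ) with hEu
  set Ev : ℝ → ℝ := fun τ => (1/2) * (v τ ⬝ᵥ v τ) with hEv
  have hFd : ∀ τ ∈ s, HasDerivWithinAt F (Ev τ - Eu τ) s τ := by
    intro τ hτ
    have hd := (hdw_dot (hz τ hτ) (hdw_mulVec (hK τ hτ) (hz τ hτ))).const_mul (1/2 : ℝ)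
    apply hd.congr_deriv
    rw [hEv, hEu, hv]
    exact (alg (K τ) (A τ) (Q τ) (B τ) (z τ) (u τ) (hKsymm τ hτ))
  -- continuity
  have hzc : ContinuousOn z s := fun τ hτ => (hz τ hτ).continuousWithinAt
  have hKc : ContinuousOn K s := fun τ hτ => (hK τ hτ).continuousWithinAt
  have hvc : ContinuousOn v s := by
    rw [hv]
    exact hu.add (contOn_mulVec (contOn_transpose hB) (contOn_mulVec hKc hzc))
  have hEuc : ContinuousOn Eu s :=
    (continuousOn_const.mul (contOn_dot hu hu)).add
      (continuousOn_const.mul (contOn_dot hzc (contOn_mulVec hQ hzc)))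
  have hEvc : ContinuousOn Ev s := continuousOn_const.mul (contOn_dot hvc hvc)
  have hFc : ContinuousOn F s := fun τ hτ => (hFd τ hτ).continuousWithinAt
  have huIcc : Set.uIcc t0 t1 = s := Set.uIcc_of_le h.le
  have hEui : IntervalIntegrable Eu volume t0 t1 := by
    apply ContinuousOn.intervalIntegrable; rw [huIcc]; exact hEuc
  have hEvi : IntervalIntegrable Ev volume t0 t1 := by
    apply ContinuousOn.intervalIntegrable; rw [huIcc]; exact hEvc
  have key : (∫ τ in t0..t1, (Ev τ - Eu τ)) = F t1 - F t0 := by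
    apply intervalIntegral.integral_eq_sub_of_hasDeriv_right_of_le h.le hFc
    · intro τ hτ
      exact ((hFd τ (Set.Ioo_subset_Icc_self hτ)).hasDerivAt
        (Icc_mem_nhds hτ.1 hτ.2)).hasDerivWithinAt
    · exact hEvi.sub hEui
  rw [intervalIntegral.integral_sub hEvi hEui] at key
  have hF0 : F t0 = (1/2) * (x ⬝ᵥ K t0 *ᵥ x) := by rw [hF]; simp [hz0]
  have hF1 : F t1 = (1/2) * (y ⬝ᵥ K1 *ᵥ y) := by rw [hF]; simp [hz1, hK1]
  have : (∫ τ in t0..t1, Eu τ) = (∫ τ in t0..t1, Ev τ) + F t0 - F t1 := by linarith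
  rw [hF0, hF1] at this
  simpa [hEu, hEv] using this
end

section
/- Let Φ, Γ, Π : (t0, t0+δ) → ℝ^{n×n} be such that for every s, Φ(s) is invertible and Γ(s), Π(s) are symmetric positive definite, and suppose Φ(s) → I, Γ(s) → 0 and Π(s) → 0 as s ↓ t0. With blocks M11(s) := Φ(s)ᵀΓ(s)⁻¹Φ(s) + Π(s), M12(s) := −Φ(s)ᵀΓ(s)⁻¹, M22(s) := Γ(s)⁻¹, the Schur complement M22(s) − M12(s)ᵀ M11(s)⁻¹ M12(s) tends to the zero matrix as s ↓ t0. -/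
open Matrix

lemma key_id (n : ℕ) (A G Q : Matrix (Fin n) (Fin n) ℝ)
    (hA : IsUnit A) (hG : G.PosDef) (hQ : Q.PosDef) :
    G⁻¹ - (-(Aᵀ * G⁻¹))ᵀ * (Aᵀ * G⁻¹ * A + Q)⁻¹ * (-(Aᵀ * G⁻¹)) =
      (Aᵀ)⁻¹ * Q * A⁻¹ * (1 + G * ((Aᵀ)⁻¹ * Q * A⁻¹))⁻¹ := by
  have hGs : Gᵀ = G := by
    have := hG.isHermitian; simpa [Matrix.IsHermitian] using this
  have hAdet : IsUnit A.det := (Matrix.isUnit_iff_isUnit_det A).mp hA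
  have hAtdet : IsUnit Aᵀ.det := by simpa using hAdet
  have hGdet : IsUnit G.det := isUnit_iff_ne_zero.mpr hG.det_pos.ne'
  have hGinv : (G⁻¹).PosDef := hG.inv
  set T : Matrix (Fin n) (Fin n) ℝ := (Aᵀ)⁻¹ * Q * A⁻¹ with hTdef
  have hTsemi : T.PosSemidef := by
    have h1 : T = (A⁻¹)ᴴ * Q * A⁻¹ := by
      rw [hTdef, conjTranspose_eq_transpose_of_trivial, transpose_nonsing_inv]
    rw [h1]
    exact hQ.posSemidef.conjTranspose_mul_mul_same A⁻¹
  set Q2 : Matrix (Fin n) (Fin n) ℝ := G⁻¹ + T with hQ2def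
  have hQ2 : Q2.PosDef := hGinv.add_posSemidef hTsemi
  have hQ2det : IsUnit Q2.det := isUnit_iff_ne_zero.mpr hQ2.det_pos.ne'
  have hGinvs : (G⁻¹)ᵀ = G⁻¹ := by rw [transpose_nonsing_inv, hGs]
  have hE : Aᵀ * G⁻¹ * A + Q = Aᵀ * Q2 * A := by
    rw [hQ2def, Matrix.mul_add, Matrix.add_mul]
    congr 1
    symm
    calc Aᵀ * ((Aᵀ)⁻¹ * Q * A⁻¹) * A
        = (Aᵀ * (Aᵀ)⁻¹) * Q * (A⁻¹ * A) := by noncomm_ring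
      _ = Q := by rw [Matrix.mul_nonsing_inv _ hAtdet, Matrix.nonsing_inv_mul _ hAdet,
            Matrix.one_mul, Matrix.mul_one]
  have hEinv : (Aᵀ * G⁻¹ * A + Q)⁻¹ = A⁻¹ * Q2⁻¹ * (Aᵀ)⁻¹ := by
    rw [hE, Matrix.mul_inv_rev, Matrix.mul_inv_rev]
    noncomm_ring
  have hLHS : G⁻¹ - (-(Aᵀ * G⁻¹))ᵀ * (Aᵀ * G⁻¹ * A + Q)⁻¹ * (-(Aᵀ * G⁻¹)) =
      G⁻¹ - G⁻¹ * Q2⁻¹ * G⁻¹ := by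
    rw [hEinv, Matrix.transpose_neg, Matrix.transpose_mul, hGinvs]
    congr 1
    calc (-(G⁻¹ * Aᵀᵀ)) * (A⁻¹ * Q2⁻¹ * (Aᵀ)⁻¹) * (-(Aᵀ * G⁻¹))
        = G⁻¹ * ((A * A⁻¹) * Q2⁻¹ * ((Aᵀ)⁻¹ * Aᵀ)) * G⁻¹ := by
          rw [transpose_transpose]; noncomm_ring
      _ = G⁻¹ * Q2⁻¹ * G⁻¹ := by
          rw [Matrix.mul_nonsing_inv _ hAdet, Matrix.nonsing_inv_mul _ hAtdet,
            Matrix.one_mul, Matrix.mul_one]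
  have hRHS : (1 : Matrix (Fin n) (Fin n) ℝ) + G * T = G * Q2 := by
    rw [hQ2def, Matrix.mul_add, Matrix.mul_nonsing_inv _ hGdet]
  rw [hLHS, hRHS, Matrix.mul_inv_rev]
  calc G⁻¹ - G⁻¹ * Q2⁻¹ * G⁻¹
      = (Q2 * Q2⁻¹ - G⁻¹ * Q2⁻¹) * G⁻¹ := by
        rw [Matrix.mul_nonsing_inv _ hQ2det]; noncomm_ring
    _ = T * (Q2⁻¹ * G⁻¹) := by rw [hQ2def]; noncomm_ring

/-- Short-time limit of the Schur complement: if `Φ(s) → I`, `Γ(s) → 0`, `Π(s) → 0` as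
`s ↓ t0`, with `Φ(s)` invertible and `Γ(s), Π(s)` symmetric positive definite, then the
Schur complement `M22 − M12ᵀ M11⁻¹ M12` of the kernel matrix tends to zero. -/
theorem stmt_8 (n : ℕ) (t0 δ : ℝ) (hδ : 0 < δ)
    (Φ Γ P : ℝ → Matrix (Fin n) (Fin n) ℝ)
    (hΦinv : ∀ s ∈ Set.Ioo t0 (t0 + δ), IsUnit (Φ s))
    (hΓ : ∀ s ∈ Set.Ioo t0 (t0 + δ), (Γ s).PosDef)
    (hP : ∀ s ∈ Set.Ioo t0 (t0 + δ), (P s).PosDef)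
    (hΦlim : Filter.Tendsto Φ (nhdsWithin t0 (Set.Ioo t0 (t0 + δ))) (nhds 1))
    (hΓlim : Filter.Tendsto Γ (nhdsWithin t0 (Set.Ioo t0 (t0 + δ))) (nhds 0))
    (hPlim : Filter.Tendsto P (nhdsWithin t0 (Set.Ioo t0 (t0 + δ))) (nhds 0)) :
    Filter.Tendsto
      (fun s => (Γ s)⁻¹
        - (-((Φ s)ᵀ * (Γ s)⁻¹))ᵀ * ((Φ s)ᵀ * (Γ s)⁻¹ * Φ s + P s)⁻¹
            * (-((Φ s)ᵀ * (Γ s)⁻¹)))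
      (nhdsWithin t0 (Set.Ioo t0 (t0 + δ))) (nhds 0) := by
  set l := nhdsWithin t0 (Set.Ioo t0 (t0 + δ))
  have hinv1 : ContinuousAt Inv.inv (1 : Matrix (Fin n) (Fin n) ℝ) := by
    apply continuousAt_matrix_inv
    simpa using NormedRing.inverse_continuousAt (1 : ℝˣ)
  have htr : Continuous fun A : Matrix (Fin n) (Fin n) ℝ => Aᵀ :=
    Continuous.matrix_transpose continuous_id
  have hΦt : Filter.Tendsto (fun s => (Φ s)ᵀ) l (nhds 1) := by
    have := (htr.tendsto 1).comp hΦlim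
    simpa [Function.comp_def] using this
  have hΦi : Filter.Tendsto (fun s => (Φ s)⁻¹) l (nhds 1) := by
    have := hinv1.tendsto.comp hΦlim
    simpa [Function.comp_def] using this
  have hΦti : Filter.Tendsto (fun s => ((Φ s)ᵀ)⁻¹) l (nhds 1) := by
    have := hinv1.tendsto.comp hΦt
    simpa [Function.comp_def] using this
  have hT : Filter.Tendsto (fun s => ((Φ s)ᵀ)⁻¹ * P s * (Φ s)⁻¹) l (nhds 0) := by
    have := (hΦti.mul hPlim).mul hΦi
    simpa using this
  have hGT : Filter.Tendsto (fun s => (1 : Matrix (Fin n) (Fin n) ℝ)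
      + Γ s * (((Φ s)ᵀ)⁻¹ * P s * (Φ s)⁻¹)) l (nhds 1) := by
    have := (tendsto_const_nhds (x := (1 : Matrix (Fin n) (Fin n) ℝ)) (f := l)).add
      (hΓlim.mul hT)
    simpa using this
  have hGTi : Filter.Tendsto (fun s => ((1 : Matrix (Fin n) (Fin n) ℝ)
      + Γ s * (((Φ s)ᵀ)⁻¹ * P s * (Φ s)⁻¹))⁻¹) l (nhds 1) := by
    have := hinv1.tendsto.comp hGT
    simpa [Function.comp_def] using this
  have hfinal : Filter.Tendsto (fun s => ((Φ s)ᵀ)⁻¹ * P s * (Φ s)⁻¹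
      * ((1 : Matrix (Fin n) (Fin n) ℝ)
        + Γ s * (((Φ s)ᵀ)⁻¹ * P s * (Φ s)⁻¹))⁻¹) l (nhds 0) := by
    have := hT.mul hGTi
    simpa using this
  refine hfinal.congr' ?_
  filter_upwards [self_mem_nhdsWithin] with s hs
  exact (key_id n (Φ s) (Γ s) (P s) (hΦinv s hs) (hΓ s hs) (hP s hs)).symm
end

section
/- (Analytic core of Theorem 1.) Let n, m ≥ 1 and let A : ℝ → ℝ^{n×n}, B : ℝ → ℝ^{n×m}, Q : ℝ → ℝ^{n×n} be continuous with Q(t) symmetric. Let c : (t0, T) → ℝ be differentiable and nowhere zero, and let M11, M12, M22 : (t0, T) → ℝ^{n×n} be differentiable with M11(t), M22(t) symmetric, satisfying for all t ∈ (t0, T): c'(t) = −trace( A(t) + B(t)B(t)ᵀ M11(t) ) · c(t), M11'(t) = −A(t)ᵀM11(t) − M11(t)A(t) − 2 M11(t)B(t)B(t)ᵀM11(t) + Q(t), M12'(t) = −A(t)ᵀM12(t) − 2 M11(t)B(t)B(t)ᵀM12(t), and M22'(t) = −2 M12(t)ᵀB(t)B(t)ᵀM12(t). Define κ : (t0,T)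 × ℝⁿ × ℝⁿ → ℝ by κ(t,x,y) := c(t) · exp( −(1/2)( xᵀM11(t)x + 2 xᵀM12(t)y + yᵀM22(t)y ) ). Then for every t ∈ (t0,T) and every x, y ∈ ℝⁿ, ∂κ/∂t (t,x,y) = −Σ_{i=1}^{n} ∂/∂x_i ( κ(t,x,y) (A(t)x)_i ) + Σ_{i,j=1}^{n} (B(t)B(t)ᵀ)_{ij} ∂²κ/∂x_i∂x_j (t,x,y) − (1/2) xᵀQ(t)x · κ(t,x,y). -/
open Matrix Real

attribute [local instance] Matrix.normedAddCommGroup Matrix.normedSpace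

/-- Partial derivative `∂f/∂x_i` of a function `f : ℝⁿ → ℝ` at `x`. -/
noncomputable def pderiv1 {n : ℕ} (f : (Fin n → ℝ) → ℝ) (i : Fin n) (x : Fin n → ℝ) : ℝ :=
  deriv (fun s => f (Function.update x i s)) (x i)

section helpers
variable {n : ℕ}

lemma hasDerivAt_update_coord (x : Fin n → ℝ) (i k : Fin n) (s0 : ℝ) :
    HasDerivAt (fun s => Function.update x i s k) (if k = i then 1 else 0) s0 := by
  rcases eq_or_ne k i with h | h
  · subst h
    simp only [Function.update_self, if_pos rfl]
    exact hasDerivAt_id s0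
  · simp only [Function.update_apply, if_neg h]
    exact hasDerivAt_const _ _

lemma hasDerivAt_dot_update (v x : Fin n → ℝ) (i : Fin n) :
    HasDerivAt (fun s => Function.update x i s ⬝ᵥ v) (v i) (x i) := by
  have h := HasDerivAt.fun_sum (fun k (_ : k ∈ Finset.univ) =>
    (hasDerivAt_update_coord x i k (x i)).mul_const (v k))
  simp only [dotProduct]
  refine h.congr_deriv (Eq.symm ?_)
  simp [Finset.sum_ite_eq', ite_mul]

lemma hasDerivAt_mulVec_update (M : Matrix (Fin n) (Fin n) ℝ) (x : Fin n → ℝ) (i j : Fin n) :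
    HasDerivAt (fun s => (M *ᵥ Function.update x i s) j) (M j i) (x i) := by
  have h := HasDerivAt.fun_sum (fun k (_ : k ∈ Finset.univ) =>
    (hasDerivAt_update_coord x i k (x i)).const_mul (M j k))
  simp only [mulVec, dotProduct]
  refine h.congr_deriv (Eq.symm ?_)
  simp [Finset.sum_ite_eq', mul_ite]

lemma hasDerivAt_quad_update (M : Matrix (Fin n) (Fin n) ℝ) (x : Fin n → ℝ) (i : Fin n) :
    HasDerivAt (fun s => Function.update x i s ⬝ᵥ M *ᵥ Function.update x i s)
      ((M *ᵥ x) i + (Mᵀ *ᵥ x) i) (x i) := by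
  have h := HasDerivAt.fun_sum (fun k (_ : k ∈ Finset.univ) =>
    (hasDerivAt_update_coord x i k (x i)).fun_mul (hasDerivAt_mulVec_update M x i k))
  simp only [dotProduct]
  refine h.congr_deriv (Eq.symm ?_)
  simp only [Function.update_eq_self]
  rw [Finset.sum_add_distrib]
  congr 1
  · simp [Finset.sum_ite_eq', ite_mul]
  · simp [mulVec, dotProduct, transpose_apply, mul_ite, mul_comm]

noncomputable def dotMatCLM (a b : Fin n → ℝ) : Matrix (Fin n) (Fin n) ℝ →L[ℝ] ℝ :=
  LinearMap.toContinuousLinearMap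
    { toFun := fun M => a ⬝ᵥ M *ᵥ b
      map_add' := by intro M N; simp [Matrix.add_mulVec, dotProduct_add]
      map_smul' := by intro r M; simp [Matrix.smul_mulVec, dotProduct_smul] }

lemma hasDerivAt_dotmat {t : ℝ} {M : ℝ → Matrix (Fin n) (Fin n) ℝ}
    {M' : Matrix (Fin n) (Fin n) ℝ} (h : HasDerivAt M M' t) (a b : Fin n → ℝ) :
    HasDerivAt (fun τ => a ⬝ᵥ M τ *ᵥ b) (a ⬝ᵥ M' *ᵥ b) t := by
  have := (dotMatCLM a b).hasFDerivAt.comp_hasDerivAt t h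
  exact this

lemma kernel_pderiv (c0 : ℝ) (M11 M12 M22 : Matrix (Fin n) (Fin n) ℝ)
    (hs : M11.IsSymm) (y x : Fin n → ℝ) (i : Fin n) :
    HasDerivAt (fun s => c0 * Real.exp (-(1/2) *
        (Function.update x i s ⬝ᵥ M11 *ᵥ Function.update x i s
          + 2 * (Function.update x i s ⬝ᵥ M12 *ᵥ y) + y ⬝ᵥ M22 *ᵥ y)))
      (-((M11 *ᵥ x + M12 *ᵥ y) i) *
        (c0 * Real.exp (-(1/2) *
          (x ⬝ᵥ M11 *ᵥ x + 2 * (x ⬝ᵥ M12 *ᵥ y) + y ⬝ᵥ M22 *ᵥ y)))) (x i) := by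
  have h1 := hasDerivAt_quad_update M11 x i
  have h2 := (hasDerivAt_dot_update (M12 *ᵥ y) x i).const_mul 2
  have h3 := (((h1.fun_add h2).add_const (y ⬝ᵥ M22 *ᵥ y)).const_mul (-(1/2))).exp.const_mul c0
  refine h3.congr_deriv (Eq.symm ?_)
  simp only [Function.update_eq_self, Pi.add_apply, hs.eq]
  ring

lemma dot_transpose_mul (Amat N : Matrix (Fin n) (Fin n) ℝ) (v w : Fin n → ℝ) :
    v ⬝ᵥ (Amatᵀ * N) *ᵥ w = (Amat *ᵥ v) ⬝ᵥ (N *ᵥ w) := by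
  rw [← Matrix.mulVec_mulVec, Matrix.dotProduct_mulVec, Matrix.vecMul_transpose]

lemma dot_symm_mul {M : Matrix (Fin n) (Fin n) ℝ} (hM : M.IsSymm)
    (N : Matrix (Fin n) (Fin n) ℝ) (v w : Fin n → ℝ) :
    v ⬝ᵥ (M * N) *ᵥ w = (M *ᵥ v) ⬝ᵥ (N *ᵥ w) := by
  conv_lhs => rw [← hM.eq]
  exact dot_transpose_mul M N v w

lemma dot_symm_swap {S : Matrix (Fin n) (Fin n) ℝ} (hS : Sᵀ = S) (u v : Fin n → ℝ) :
    v ⬝ᵥ S *ᵥ u = u ⬝ᵥ S *ᵥ v := by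
  rw [Matrix.dotProduct_mulVec]
  have : v ᵥ* S = S *ᵥ v := by conv_lhs => rw [← hS, Matrix.vecMul_transpose]
  rw [this, dotProduct_comm]

lemma sum_adv (g a : Fin n → ℝ) (k : ℝ) (Amat : Matrix (Fin n) (Fin n) ℝ) :
    ∑ i, (-(g i) * k * a i + k * Amat i i) = -((g ⬝ᵥ a) * k) + Amat.trace * k := by
  rw [Finset.sum_add_distrib]
  congr 1
  · calc ∑ i, -(g i) * k * a i = ∑ i, -(g i * a i * k) :=
          Finset.sum_congr rfl (fun i _ => by ring)
      _ = -∑ i, g i * a i * k := by rw [Finset.sum_neg_distrib]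
      _ = -((∑ i, g i * a i) * k) := by rw [Finset.sum_mul]
      _ = -((g ⬝ᵥ a) * k) := by rw [dotProduct]
  · rw [Matrix.trace, Finset.sum_mul]
    exact Finset.sum_congr rfl (fun i _ => by simp [Matrix.diag, mul_comm])

lemma sum_diff {M : Matrix (Fin n) (Fin n) ℝ} (S : Matrix (Fin n) (Fin n) ℝ)
    (hM : M.IsSymm) (g : Fin n → ℝ) (k : ℝ) :
    ∑ i, ∑ j, S i j * ((g i * g j - M i j) * k)
      = (g ⬝ᵥ S *ᵥ g) * k - (S * M).trace * k := by
  have h1 : ∀ i j, S i j * ((g i * g j - M i j) * k)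
      = g i * (S i j * g j) * k - S i j * M j i * k := by
    intro i j; rw [hM.apply j i]; ring
  simp only [h1]
  rw [Finset.sum_congr rfl (fun i _ => Finset.sum_sub_distrib _ _), Finset.sum_sub_distrib]
  congr 1
  · rw [dotProduct, Finset.sum_mul]
    refine Finset.sum_congr rfl (fun i _ => ?_)
    rw [mulVec, dotProduct, Finset.mul_sum, Finset.sum_mul]
  · rw [Matrix.trace, Finset.sum_mul]
    refine Finset.sum_congr rfl (fun i _ => ?_)
    rw [Matrix.diag, Matrix.mul_apply, Finset.sum_mul]

end helpers

/-- Analytic core of Theorem 1: if the prefactor `c` and the blocks `M11, M12, M22`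
satisfy the stated ODE system, then the Gaussian-type kernel
`κ(t,x,y) = c(t)·exp(−(1/2)(xᵀM11x + 2xᵀM12y + yᵀM22y))` solves the
reaction–advection–diffusion PDE
`∂ₜκ = −⟨∇ₓ, κ A x⟩ + ⟨BBᵀ, ∇ₓ²κ⟩ − (1/2)xᵀQx·κ`. -/
theorem stmt_13 (n m : ℕ) (hn : 1 ≤ n) (hm : 1 ≤ m) (t0 T : ℝ)
    (A Q : ℝ → Matrix (Fin n) (Fin n) ℝ) (B : ℝ → Matrix (Fin n) (Fin m) ℝ)
    (hA : Continuous A) (hB : Continuous B) (hQ : Continuous Q)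
    (hQsymm : ∀ t, (Q t).IsSymm)
    (c : ℝ → ℝ)
    (M11 M12 M22 : ℝ → Matrix (Fin n) (Fin n) ℝ)
    (hM11symm : ∀ t ∈ Set.Ioo t0 T, (M11 t).IsSymm)
    (hM22symm : ∀ t ∈ Set.Ioo t0 T, (M22 t).IsSymm)
    (hc0 : ∀ t ∈ Set.Ioo t0 T, c t ≠ 0)
    (hc : ∀ t ∈ Set.Ioo t0 T,
      HasDerivAt c (-(Matrix.trace (A t + B t * (B t)ᵀ * M11 t)) * c t) t)
    (hM11 : ∀ t ∈ Set.Ioo t0 T,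
      HasDerivAt M11
        (-(A t)ᵀ * M11 t - M11 t * A t - 2 • (M11 t * (B t * (B t)ᵀ) * M11 t) + Q t) t)
    (hM12 : ∀ t ∈ Set.Ioo t0 T,
      HasDerivAt M12
        (-(A t)ᵀ * M12 t - 2 • (M11 t * (B t * (B t)ᵀ) * M12 t)) t)
    (hM22 : ∀ t ∈ Set.Ioo t0 T,
      HasDerivAt M22 (-(2 • ((M12 t)ᵀ * (B t * (B t)ᵀ) * M12 t))) t)
    (κ : ℝ → (Fin n → ℝ) → (Fin n → ℝ) → ℝ)
    (hκ : κ = fun t x y => c t *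
      Real.exp (-(1/2) * (x ⬝ᵥ M11 t *ᵥ x + 2 * (x ⬝ᵥ M12 t *ᵥ y) + y ⬝ᵥ M22 t *ᵥ y))) :
    ∀ t ∈ Set.Ioo t0 T, ∀ x y : Fin n → ℝ,
      HasDerivAt (fun τ => κ τ x y)
        (-(∑ i, pderiv1 (fun x' => κ t x' y * (A t *ᵥ x') i) i x)
          + (∑ i, ∑ j, (B t * (B t)ᵀ) i j *
              pderiv1 (pderiv1 (fun x' => κ t x' y) j) i x)
          - (1/2) * (x ⬝ᵥ Q t *ᵥ x) * κ t x y) t := by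
  intro t ht x y
  subst hκ
  beta_reduce
  have hsym := hM11symm t ht
  have hSsymm : (B t * (B t)ᵀ)ᵀ = B t * (B t)ᵀ := by
    rw [Matrix.transpose_mul, Matrix.transpose_transpose]
  -- abbreviations
  set u : Fin n → ℝ := M11 t *ᵥ x with hu
  set v : Fin n → ℝ := M12 t *ᵥ y with hv
  set a : Fin n → ℝ := A t *ᵥ x with ha
  set E : ℝ := Real.exp (-(1/2) * (x ⬝ᵥ M11 t *ᵥ x + 2 * (x ⬝ᵥ M12 t *ᵥ y) + y ⬝ᵥ M22 t *ᵥ y)) with hE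
  -- first spatial derivative at an arbitrary point
  have hκx : ∀ (x' : Fin n → ℝ) (j : Fin n),
      pderiv1 (fun x'' => c t * Real.exp (-(1/2) *
        (x'' ⬝ᵥ M11 t *ᵥ x'' + 2 * (x'' ⬝ᵥ M12 t *ᵥ y) + y ⬝ᵥ M22 t *ᵥ y))) j x'
        = -((M11 t *ᵥ x' + M12 t *ᵥ y) j) * (c t * Real.exp (-(1/2) *
          (x' ⬝ᵥ M11 t *ᵥ x' + 2 * (x' ⬝ᵥ M12 t *ᵥ y) + y ⬝ᵥ M22 t *ᵥ y))) :=
    fun x' j => (kernel_pderiv (c t) (M11 t) (M12 t) (M22 t) hsym y x' j).deriv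
  -- second spatial derivatives
  have hκxx : ∀ i j : Fin n,
      pderiv1 (pderiv1 (fun x' => c t * Real.exp (-(1/2) *
        (x' ⬝ᵥ M11 t *ᵥ x' + 2 * (x' ⬝ᵥ M12 t *ᵥ y) + y ⬝ᵥ M22 t *ᵥ y))) j) i x
        = (((u + v) i) * ((u + v) j) - M11 t i j) * (c t * E) := by
    intro i j
    have hfun : pderiv1 (fun x' => c t * Real.exp (-(1/2) *
        (x' ⬝ᵥ M11 t *ᵥ x' + 2 * (x' ⬝ᵥ M12 t *ᵥ y) + y ⬝ᵥ M22 t *ᵥ y))) j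
        = fun x' => -((M11 t *ᵥ x' + M12 t *ᵥ y) j) * (c t * Real.exp (-(1/2) *
          (x' ⬝ᵥ M11 t *ᵥ x' + 2 * (x' ⬝ᵥ M12 t *ᵥ y) + y ⬝ᵥ M22 t *ᵥ y))) :=
      funext (fun x' => hκx x' j)
    rw [hfun]
    refine HasDerivAt.deriv ?_
    have hf : HasDerivAt (fun s => -((M11 t *ᵥ Function.update x i s + M12 t *ᵥ y) j))
        (-(M11 t j i)) (x i) := by
      have := ((hasDerivAt_mulVec_update (M11 t) x i j).add_const ((M12 t *ᵥ y) j)).fun_neg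
      simpa using this
    have hg := kernel_pderiv (c t) (M11 t) (M12 t) (M22 t) hsym y x i
    refine (hf.fun_mul hg).congr_deriv (Eq.symm ?_)
    simp only [Function.update_eq_self, Pi.add_apply, hsym.apply j i]
    ring
  -- advection derivatives
  have hadv : ∀ i : Fin n,
      pderiv1 (fun x' => c t * Real.exp (-(1/2) *
        (x' ⬝ᵥ M11 t *ᵥ x' + 2 * (x' ⬝ᵥ M12 t *ᵥ y) + y ⬝ᵥ M22 t *ᵥ y)) * (A t *ᵥ x') i) i x
        = -((u + v) i) * (c t * E) * a i + (c t * E) * A t i i := by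
    intro i
    refine HasDerivAt.deriv ?_
    have hg := kernel_pderiv (c t) (M11 t) (M12 t) (M22 t) hsym y x i
    refine (hg.fun_mul (hasDerivAt_mulVec_update (A t) x i i)).congr_deriv (Eq.symm ?_)
    simp only [Function.update_eq_self, Pi.add_apply]
    rfl
  -- time derivative
  have hFt := ((hasDerivAt_dotmat (hM11 t ht) x x).fun_add
      ((hasDerivAt_dotmat (hM12 t ht) x y).const_mul 2)).fun_add
      (hasDerivAt_dotmat (hM22 t ht) y y)
  have hκt := (hc t ht).fun_mul ((hFt.const_mul (-(1/2))).exp)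
  refine hκt.congr_deriv (Eq.symm ?_)
  -- now an algebraic identity between the two derivative expressions
  have hsum1 : ∑ i, pderiv1 (fun x' => c t * Real.exp (-(1/2) *
        (x' ⬝ᵥ M11 t *ᵥ x' + 2 * (x' ⬝ᵥ M12 t *ᵥ y) + y ⬝ᵥ M22 t *ᵥ y)) * (A t *ᵥ x') i) i x
      = -(((u + v) ⬝ᵥ a) * (c t * E)) + (A t).trace * (c t * E) := by
    rw [Finset.sum_congr rfl (fun i _ => hadv i)]
    exact sum_adv (u + v) a (c t * E) (A t)
  have hsum2 : ∑ i, ∑ j, (B t * (B t)ᵀ) i j * pderiv1 (pderiv1 (fun x' =>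
        c t * Real.exp (-(1/2) *
        (x' ⬝ᵥ M11 t *ᵥ x' + 2 * (x' ⬝ᵥ M12 t *ᵥ y) + y ⬝ᵥ M22 t *ᵥ y))) j) i x
      = ((u + v) ⬝ᵥ (B t * (B t)ᵀ) *ᵥ (u + v)) * (c t * E)
        - ((B t * (B t)ᵀ) * M11 t).trace * (c t * E) := by
    rw [Finset.sum_congr rfl (fun i _ => Finset.sum_congr rfl (fun j _ => by rw [hκxx i j]))]
    exact sum_diff (B t * (B t)ᵀ) hsym (u + v) (c t * E)
  rw [hsum1, hsum2]
  -- expand the matrix ODE right-hand sides as scalars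
  have eq1 : x ⬝ᵥ (-(A t)ᵀ * M11 t - M11 t * A t
        - 2 • (M11 t * (B t * (B t)ᵀ) * M11 t) + Q t) *ᵥ x
      = -(a ⬝ᵥ u) - u ⬝ᵥ a - 2 * (u ⬝ᵥ (B t * (B t)ᵀ) *ᵥ u) + x ⬝ᵥ Q t *ᵥ x := by
    rw [Matrix.add_mulVec, Matrix.sub_mulVec, Matrix.sub_mulVec, dotProduct_add,
      dotProduct_sub, dotProduct_sub, Matrix.neg_mul, Matrix.neg_mulVec, dotProduct_neg,
      dot_transpose_mul (A t) (M11 t) x x, dot_symm_mul hsym (A t) x x,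
      two_smul, Matrix.add_mulVec, dotProduct_add,
      Matrix.mul_assoc (M11 t) (B t * (B t)ᵀ) (M11 t),
      dot_symm_mul hsym (B t * (B t)ᵀ * M11 t) x x, ← Matrix.mulVec_mulVec]
    simp only [hu, hv, ha]
    ring
  have eq2 : x ⬝ᵥ (-(A t)ᵀ * M12 t - 2 • (M11 t * (B t * (B t)ᵀ) * M12 t)) *ᵥ y
      = -(a ⬝ᵥ v) - 2 * (u ⬝ᵥ (B t * (B t)ᵀ) *ᵥ v) := by
    rw [Matrix.sub_mulVec, dotProduct_sub, Matrix.neg_mul, Matrix.neg_mulVec, dotProduct_neg,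
      dot_transpose_mul (A t) (M12 t) x y,
      two_smul, Matrix.add_mulVec, dotProduct_add,
      Matrix.mul_assoc (M11 t) (B t * (B t)ᵀ) (M12 t),
      dot_symm_mul hsym (B t * (B t)ᵀ * M12 t) x y, ← Matrix.mulVec_mulVec]
    simp only [hu, hv, ha]
    ring
  have eq3 : y ⬝ᵥ (-(2 • ((M12 t)ᵀ * (B t * (B t)ᵀ) * M12 t))) *ᵥ y
      = -(2 * (v ⬝ᵥ (B t * (B t)ᵀ) *ᵥ v)) := by
    rw [Matrix.neg_mulVec, dotProduct_neg, two_smul, Matrix.add_mulVec, dotProduct_add,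
      Matrix.mul_assoc ((M12 t)ᵀ) (B t * (B t)ᵀ) (M12 t),
      dot_transpose_mul (M12 t) (B t * (B t)ᵀ * M12 t) y y, ← Matrix.mulVec_mulVec]
    simp only [hv]
    ring
  rw [eq1, eq2, eq3, Matrix.trace_add]
  -- bilinear expansions and symmetry swaps
  have hbil : (u + v) ⬝ᵥ (B t * (B t)ᵀ) *ᵥ (u + v)
      = u ⬝ᵥ (B t * (B t)ᵀ) *ᵥ u + 2 * (u ⬝ᵥ (B t * (B t)ᵀ) *ᵥ v)
        + v ⬝ᵥ (B t * (B t)ᵀ) *ᵥ v := by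
    rw [Matrix.mulVec_add, dotProduct_add, add_dotProduct, add_dotProduct,
      dot_symm_swap hSsymm v u]
    ring
  have hgva : (u + v) ⬝ᵥ a = u ⬝ᵥ a + v ⬝ᵥ a := add_dotProduct u v a
  have hau : a ⬝ᵥ u = u ⬝ᵥ a := dotProduct_comm a u
  have hav : a ⬝ᵥ v = v ⬝ᵥ a := dotProduct_comm a v
  rw [hbil, hgva, hau, hav]
  simp only [hu, hv, ha, hE]
  ring
end

section
/- Let n ≥ 1, ω_1, …, ω_n > 0, t0 ∈ ℝ, t > t0, and y ∈ ℝⁿ. With κ(t, x, y) := ∏_{i=1}^{n} ( ω_i / (4π sinh(ω_i (t − t0))) )^{1/2} · exp( −( ω_i (x_i² + y_i²) cosh(ω_i (t − t0)) − 2 ω_i x_i y_i ) / ( 4 sinh(ω_i (t − t0)) ) ), the integral over x satisfies ∫_{ℝⁿ} κ(t, x, y) dx = ∏_{i=1}^{n} ( cosh(ω_i (t − t0)) )^{−1/2} · exp( −( ω_i y_i² tanh(ω_i (t − t0)) ) / 4 ). In particular, this integral is strictly less than 1 for t > t0. -/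
open Real MeasureTheory

lemma gauss_lin_aux (a b d : ℝ) (ha : 0 < a) :
    ∫ x : ℝ, Real.exp (-a * x ^ 2 + b * x + d)
      = Real.sqrt (π / a) * Real.exp (d + b ^ 2 / (4 * a)) := by
  have h : ∀ x : ℝ, -a * x ^ 2 + b * x + d
      = -a * (x - b / (2 * a)) ^ 2 + (d + b ^ 2 / (4 * a)) := by
    intro x; field_simp; ring
  simp_rw [h, Real.exp_add, integral_mul_const]
  rw [show (fun x : ℝ => Real.exp (-a * (x - b / (2*a)) ^ 2)) = fun x =>
    (fun z : ℝ => Real.exp (-a * z ^ 2)) (x - b/(2*a)) from rfl]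
  rw [integral_sub_right_eq_self (fun z : ℝ => Real.exp (-a * z ^ 2)) (b/(2*a))]
  rw [integral_gaussian]

lemma one_dim_aux (w u z : ℝ) (hw : 0 < w) (hu : 0 < u) :
    ∫ x : ℝ, Real.sqrt (w / (4 * π * Real.sinh u)) *
        Real.exp (-((w * (x^2 + z^2) * Real.cosh u - 2 * w * x * z) / (4 * Real.sinh u)))
      = (1 / Real.sqrt (Real.cosh u)) * Real.exp (-(w * z^2 * Real.tanh u) / 4) := by
  have hs : 0 < Real.sinh u := (Real.sinh_pos_iff.mpr hu)
  have hc : 0 < Real.cosh u := Real.cosh_pos u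
  set a := w * Real.cosh u / (4 * Real.sinh u) with ha_def
  have ha : 0 < a := by positivity
  set b := w * z / (2 * Real.sinh u) with hb_def
  set d := -(w * z^2 * Real.cosh u / (4 * Real.sinh u)) with hd_def
  have hexp : ∀ x : ℝ, -((w * (x^2 + z^2) * Real.cosh u - 2 * w * x * z) / (4 * Real.sinh u))
      = -a * x ^ 2 + b * x + d := by
    intro x; rw [ha_def, hb_def, hd_def]; field_simp; ring
  simp_rw [hexp, integral_const_mul, gauss_lin_aux a b d ha]
  have h1 : Real.sqrt (w / (4 * π * Real.sinh u)) * Real.sqrt (π / a)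
      = 1 / Real.sqrt (Real.cosh u) := by
    rw [← Real.sqrt_mul (by positivity)]
    rw [show w / (4 * π * Real.sinh u) * (π / a) = 1 / Real.cosh u by
      rw [ha_def]; field_simp]
    rw [one_div, Real.sqrt_inv, one_div]
  have h2 : d + b ^ 2 / (4 * a) = -(w * z^2 * Real.tanh u) / 4 := by
    rw [ha_def, hb_def, hd_def, Real.tanh_eq_sinh_div_cosh]
    have hcs : Real.cosh u ^ 2 = Real.sinh u ^ 2 + 1 := Real.cosh_sq u
    field_simp
    ring_nf
    linear_combination (-(4 * z^2)) * hcs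
  rw [← mul_assoc, h1, h2]

/-- Total mass of the kernel of Brownian motion with quadratic killing: integrating over
`x` yields `∏ᵢ cosh(ωᵢ(t−t0))^{−1/2} exp(−ωᵢyᵢ²tanh(ωᵢ(t−t0))/4)`, which is strictly
less than one for `t > t0`. -/
theorem stmt_15 (n : ℕ) (hn : 1 ≤ n) (ω : Fin n → ℝ) (hω : ∀ i, 0 < ω i)
    (t0 t : ℝ) (ht : t0 < t) (y : Fin n → ℝ)
    (κ : ℝ → (Fin n → ℝ) → (Fin n → ℝ) → ℝ)
    (hκ : κ = fun t x y => ∏ i,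
      (Real.sqrt (ω i / (4 * Real.pi * Real.sinh (ω i * (t - t0)))) *
        Real.exp (-((ω i * ((x i)^2 + (y i)^2) * Real.cosh (ω i * (t - t0))
            - 2 * ω i * x i * y i) / (4 * Real.sinh (ω i * (t - t0))))))) :
    (∫ x : Fin n → ℝ, κ t x y)
        = ∏ i, ((1 / Real.sqrt (Real.cosh (ω i * (t - t0)))) *
            Real.exp (-(ω i * (y i)^2 * Real.tanh (ω i * (t - t0))) / 4)) ∧
    (∫ x : Fin n → ℝ, κ t x y) < 1 := by
  have hu : ∀ i, 0 < ω i * (t - t0) := fun i => mul_pos (hω i) (by linarith)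
  have key : (∫ x : Fin n → ℝ, κ t x y)
      = ∏ i, ((1 / Real.sqrt (Real.cosh (ω i * (t - t0)))) *
          Real.exp (-(ω i * (y i)^2 * Real.tanh (ω i * (t - t0))) / 4)) := by
    rw [hκ]
    beta_reduce
    rw [MeasureTheory.volume_pi]
    rw [MeasureTheory.integral_fintype_prod_eq_prod (ι := Fin n)
      (f := fun i (z : ℝ) => Real.sqrt (ω i / (4 * Real.pi * Real.sinh (ω i * (t - t0)))) *
        Real.exp (-((ω i * (z^2 + (y i)^2) * Real.cosh (ω i * (t - t0))
            - 2 * ω i * z * y i) / (4 * Real.sinh (ω i * (t - t0))))))]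
    exact Finset.prod_congr rfl fun i _ => one_dim_aux (ω i) (ω i * (t - t0)) (y i) (hω i) (hu i)
  refine ⟨key, ?_⟩
  rw [key]
  have hne : (Finset.univ : Finset (Fin n)).Nonempty := ⟨⟨0, hn⟩, Finset.mem_univ _⟩
  calc ∏ i, ((1 / Real.sqrt (Real.cosh (ω i * (t - t0)))) *
            Real.exp (-(ω i * (y i)^2 * Real.tanh (ω i * (t - t0))) / 4))
      < ∏ _i : Fin n, 1 := by
        apply Finset.prod_lt_prod_of_nonempty _ _ hne
        · intro i _; positivity
        · intro i _
          have hc1 : 1 < Real.cosh (ω i * (t - t0)) := by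
            rw [Real.one_lt_cosh]; exact (hu i).ne'
          have h1 : 1 / Real.sqrt (Real.cosh (ω i * (t - t0))) < 1 := by
            rw [div_lt_one (by positivity)]
            calc (1:ℝ) = Real.sqrt 1 := by simp
              _ < Real.sqrt (Real.cosh (ω i * (t - t0))) :=
                  Real.sqrt_lt_sqrt (by norm_num) hc1
          have h2 : Real.exp (-(ω i * (y i)^2 * Real.tanh (ω i * (t - t0))) / 4) ≤ 1 := by
            rw [Real.exp_le_one_iff]
            have ht' : 0 < Real.tanh (ω i * (t - t0)) := by
              rw [Real.tanh_eq_sinh_div_cosh]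
              exact div_pos ((Real.sinh_pos_iff.mpr (hu i))) (Real.cosh_pos _)
            have h0 : 0 ≤ ω i * y i ^ 2 * Real.tanh (ω i * (t - t0)) :=
              mul_nonneg (mul_nonneg (hω i).le (sq_nonneg _)) ht'.le
            linarith
          calc (1 / Real.sqrt (Real.cosh (ω i * (t - t0)))) *
                Real.exp (-(ω i * (y i)^2 * Real.tanh (ω i * (t - t0))) / 4)
              ≤ (1 / Real.sqrt (Real.cosh (ω i * (t - t0)))) * 1 := by
                apply mul_le_mul_of_nonneg_left h2 (by positivity)
            _ = 1 / Real.sqrt (Real.cosh (ω i * (t - t0))) := mul_one _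
            _ < 1 := h1
    _ = 1 := Finset.prod_const_one
end

section
/- (Minimum-energy steering value.) Let t0 < t1, let Â : [t0,t1] → ℝ^{n×n} and B̂ : [t0,t1] → ℝ^{n×m} be continuous, and let Φ : [t0,t1] → ℝ^{n×n} be differentiable with Φ(t0) = I, Φ'(τ) = Â(τ)Φ(τ), and Φ(τ) invertible for all τ. Define the controllability Gramian Γ := ∫_{t0}^{t1} Φ(t1)Φ(τ)⁻¹ B̂(τ) B̂(τ)ᵀ (Φ(t1)Φ(τ)⁻¹)ᵀ dτ and assume Γ is positive definite. Then for all x, y ∈ ℝⁿ, the infimum of ∫_{t0}^{t1} (1/2)|v(τ)|² dτ over all continuously differentiable z : [t0,t1] → ℝⁿ and continuous v : [t0,t1] → ℝᵐ with z'(τ) = Â(τ)z(τ) + B̂(τ)v(τ), z(t0) = x, z(t1) = y, equals (1/2)( Φ(t1)x − y )ᵀ Γ⁻¹ ( Φ(t1)x − y ), and the infimum is attained. -/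
open MeasureTheory Matrix

attribute [local instance] Matrix.normedAddCommGroup Matrix.normedSpace

private theorem stmt16_intInt {E : Type*} [NormedAddCommGroup E] {f : ℝ → E} {t0 t1 : ℝ}
    (h : t0 ≤ t1) (hf : ContinuousOn f (Set.Icc t0 t1)) :
    IntervalIntegrable f volume t0 t1 := by
  apply ContinuousOn.intervalIntegrable
  rwa [Set.uIcc_of_le h]

private theorem stmt16_hdw_mulVec {a b : ℕ} {M : ℝ → Matrix (Fin a) (Fin b) ℝ}
    {M' : Matrix (Fin a) (Fin b) ℝ}
    {g : ℝ → Fin b → ℝ} {g' : Fin b → ℝ} {s : Set ℝ} {τ : ℝ}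
    (hM : HasDerivWithinAt M M' s τ) (hg : HasDerivWithinAt g g' s τ) :
    HasDerivWithinAt (fun t => M t *ᵥ g t) (M' *ᵥ g τ + M τ *ᵥ g') s τ := by
  rw [hasDerivWithinAt_pi]
  intro i
  have : HasDerivWithinAt (fun t => ∑ j, M t i j * g t j)
      (∑ j, (M' i j * g τ j + M τ i j * g' j)) s τ := by
    refine HasDerivWithinAt.fun_sum fun j _ => ?_
    exact (hasDerivWithinAt_pi.1 (hasDerivWithinAt_pi.1 hM i) j).mul (hasDerivWithinAt_pi.1 hg j)
  convert this using 1 <;> [rfl; rfl; rfl; simp [Matrix.mulVec, dotProduct, Finset.sum_add_distrib]]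

private noncomputable def stmt16_mulVecCLM {a b : ℕ} (M : Matrix (Fin a) (Fin b) ℝ) :
    (Fin b → ℝ) →L[ℝ] (Fin a → ℝ) := LinearMap.toContinuousLinearMap M.mulVecLin

private noncomputable def stmt16_dotCLM {a : ℕ} (c : Fin a → ℝ) : (Fin a → ℝ) →L[ℝ] ℝ :=
  LinearMap.toContinuousLinearMap
    { toFun := fun w => c ⬝ᵥ w
      map_add' := fun u v => dotProduct_add c u v
      map_smul' := fun r u => by simp [dotProduct_smul] }

private noncomputable def stmt16_matApplyCLM {a b : ℕ} (c : Fin b → ℝ) :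
    Matrix (Fin a) (Fin b) ℝ →L[ℝ] (Fin a → ℝ) :=
  LinearMap.toContinuousLinearMap
    { toFun := fun M => M *ᵥ c
      map_add' := fun U V => Matrix.add_mulVec U V c
      map_smul' := fun r U => by ext i; simp [Matrix.smul_mulVec] }

private theorem stmt16_mulVec_norm_le {a b : ℕ} (M : Matrix (Fin a) (Fin b) ℝ) (u : Fin b → ℝ) :
    ‖M *ᵥ u‖ ≤ (b : ℝ) * ‖M‖ * ‖u‖ := by
  have h0 : (0:ℝ) ≤ (b : ℝ) * ‖M‖ * ‖u‖ := by positivity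
  rw [pi_norm_le_iff_of_nonneg h0]
  intro i
  calc ‖(M *ᵥ u) i‖ = |∑ j, M i j * u j| := rfl
  _ ≤ ∑ j, |M i j * u j| := Finset.abs_sum_le_sum_abs _ _
  _ ≤ ∑ _j : Fin b, ‖M‖ * ‖u‖ := by
      refine Finset.sum_le_sum fun j _ => ?_
      rw [abs_mul]
      exact mul_le_mul (M.norm_entry_le_entrywise_sup_norm) (norm_le_pi_norm u j)
        (abs_nonneg _) (norm_nonneg _)
  _ = (b:ℝ) * ‖M‖ * ‖u‖ := by simp [mul_assoc]

private theorem stmt16_ode_unique {n : ℕ} {t0 t1 : ℝ} (h : t0 ≤ t1)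
    {A : ℝ → Matrix (Fin n) (Fin n) ℝ}
    (hA : ContinuousOn A (Set.Icc t0 t1)) (r : ℝ → Fin n → ℝ) {z q : ℝ → Fin n → ℝ}
    (hz : ∀ τ ∈ Set.Icc t0 t1, HasDerivWithinAt z (A τ *ᵥ z τ + r τ) (Set.Icc t0 t1) τ)
    (hq : ∀ τ ∈ Set.Icc t0 t1, HasDerivWithinAt q (A τ *ᵥ q τ + r τ) (Set.Icc t0 t1) τ)
    (h0 : z t0 = q t0) : Set.EqOn z q (Set.Icc t0 t1) := by
  obtain ⟨C, hC⟩ := (isCompact_Icc (a := t0) (b := t1)).exists_bound_of_continuousOn hA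
  set c : ℝ → ℝ := fun t => min (max t t0) t1 with hc
  have hcmem : ∀ t, c t ∈ Set.Icc t0 t1 := fun t => ⟨le_min (le_max_right _ _) h, min_le_right _ _⟩
  have hceq : ∀ t ∈ Set.Icc t0 t1, c t = t := fun t ht => by
    simp [hc, max_eq_left ht.1, min_eq_left ht.2]
  set F : ℝ → (Fin n → ℝ) → (Fin n → ℝ) := fun t w => A (c t) *ᵥ w + r (c t) with hF
  have hlip : ∀ t, LipschitzWith (Real.toNNReal ((n : ℝ) * C)) (F t) := by
    intro t
    refine LipschitzWith.of_dist_le_mul fun w1 w2 => ?_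
    have hsub : F t w1 - F t w2 = A (c t) *ᵥ (w1 - w2) := by
      simp [hF, Matrix.mulVec_sub]
    rw [dist_eq_norm, dist_eq_norm, hsub]
    calc ‖A (c t) *ᵥ (w1 - w2)‖ ≤ (n : ℝ) * ‖A (c t)‖ * ‖w1 - w2‖ := stmt16_mulVec_norm_le _ _
    _ ≤ (n : ℝ) * C * ‖w1 - w2‖ := by
        have := hC (c t) (hcmem t)
        gcongr
    _ ≤ ↑(Real.toNNReal ((n:ℝ) * C)) * ‖w1 - w2‖ := by
        gcongr
        exact Real.le_coe_toNNReal _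
  have key : ∀ t ∈ Set.Ico t0 t1, ∀ {f : ℝ → Fin n → ℝ},
      (∀ τ ∈ Set.Icc t0 t1, HasDerivWithinAt f (A τ *ᵥ f τ + r τ) (Set.Icc t0 t1) τ) →
      HasDerivWithinAt f (F t (f t)) (Set.Ici t) t := by
    intro t ht f hf
    have := (hf t ⟨ht.1, ht.2.le⟩).mono_of_mem_nhdsWithin (Icc_mem_nhdsGE_of_mem ht)
    simpa [hF, hceq t ⟨ht.1, ht.2.le⟩] using this
  refine ODE_solution_unique_of_mem_Icc_right
    (fun t _ => (hlip t).lipschitzOnWith (s := Set.univ)) ?_ (fun t ht => key t ht hz)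
    (fun _ _ => trivial) ?_ (fun t ht => key t ht hq) (fun _ _ => trivial) h0
  · exact fun τ hτ => (hz τ hτ).continuousWithinAt
  · exact fun τ hτ => (hq τ hτ).continuousWithinAt

private theorem stmt16_ftc {a : ℕ} {t0 t1 : ℝ} (p : ℝ → Fin a → ℝ)
    (hp : ContinuousOn p (Set.Icc t0 t1)) {τ : ℝ} (hτ : τ ∈ Set.Icc t0 t1) :
    HasDerivWithinAt (fun r => ∫ s in t0..r, p s) (p τ) (Set.Icc t0 t1) τ := by
  haveI : Fact (τ ∈ Set.Icc t0 t1) := ⟨hτ⟩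
  refine intervalIntegral.integral_hasDerivWithinAt_right ?_ ?_ (hp τ hτ)
  · refine ContinuousOn.intervalIntegrable ?_
    rw [Set.uIcc_of_le hτ.1]
    exact hp.mono (Set.Icc_subset_Icc_right hτ.2)
  · exact AEStronglyMeasurable.stronglyMeasurableAtFilter_of_mem
      (hp.aestronglyMeasurable measurableSet_Icc) self_mem_nhdsWithin

set_option maxHeartbeats 2000000 in
/-- Minimum-energy steering value: for the controllable linear time-varying system
`z' = Âz + B̂v`, the least value of `∫ (1/2)|v|²` over admissible pairs steering `x`
at `t0` to `y` at `t1` is `(1/2)(Φ(t1)x − y)ᵀΓ⁻¹(Φ(t1)x − y)`, where `Γ` is the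
controllability Gramian; the infimum is attained. -/
theorem stmt_16 (n m : ℕ) (t0 t1 : ℝ) (h : t0 < t1)
    (Ahat : ℝ → Matrix (Fin n) (Fin n) ℝ) (B : ℝ → Matrix (Fin n) (Fin m) ℝ)
    (hA : ContinuousOn Ahat (Set.Icc t0 t1)) (hB : ContinuousOn B (Set.Icc t0 t1))
    (Φ : ℝ → Matrix (Fin n) (Fin n) ℝ) (hΦ0 : Φ t0 = 1)
    (hΦ : ∀ τ ∈ Set.Icc t0 t1,
      HasDerivWithinAt Φ (Ahat τ * Φ τ) (Set.Icc t0 t1) τ)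
    (hΦinv : ∀ τ ∈ Set.Icc t0 t1, IsUnit (Φ τ))
    (Γ : Matrix (Fin n) (Fin n) ℝ)
    (hΓdef : Γ = ∫ τ in t0..t1,
      (Φ t1 * (Φ τ)⁻¹) * B τ * (B τ)ᵀ * (Φ t1 * (Φ τ)⁻¹)ᵀ)
    (hΓ : Γ.PosDef) (x y : Fin n → ℝ) :
    IsLeast {E : ℝ | ∃ (z : ℝ → Fin n → ℝ) (v : ℝ → Fin m → ℝ),
        ContinuousOn v (Set.Icc t0 t1) ∧
        (∀ τ ∈ Set.Icc t0 t1,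
          HasDerivWithinAt z (Ahat τ *ᵥ z τ + B τ *ᵥ v τ) (Set.Icc t0 t1) τ) ∧
        z t0 = x ∧ z t1 = y ∧
        E = ∫ τ in t0..t1, (1/2) * (v τ ⬝ᵥ v τ)}
      ((1/2) * ((Φ t1 *ᵥ x - y) ⬝ᵥ Γ⁻¹ *ᵥ (Φ t1 *ᵥ x - y))) := by
  have hle : t0 ≤ t1 := h.le
  have ht1mem : t1 ∈ Set.Icc t0 t1 := ⟨hle, le_refl _⟩
  set I : Set ℝ := Set.Icc t0 t1 with hI
  set ξ : Fin n → ℝ := Φ t1 *ᵥ x - y with hξ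
  set cvec : Fin n → ℝ := Γ⁻¹ *ᵥ ξ with hcvec
  set Gm : ℝ → Matrix (Fin n) (Fin m) ℝ := fun τ => Φ t1 * (Φ τ)⁻¹ * B τ with hGm
  set w : ℝ → Fin m → ℝ := fun τ => (Gm τ)ᵀ *ᵥ cvec with hw
  -- continuity facts
  have hΦc : ContinuousOn Φ I := fun τ hτ => (hΦ τ hτ).continuousWithinAt
  have hΨc : ContinuousOn (fun τ => (Φ τ)⁻¹) I := by
    have hdet : ContinuousOn (fun τ => (Φ τ).det) I :=
      (Continuous.matrix_det continuous_id).comp_continuousOn hΦc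
    have hadj : ContinuousOn (fun τ => (Φ τ).adjugate) I :=
      (Continuous.matrix_adjugate continuous_id).comp_continuousOn hΦc
    have hsmul : ContinuousOn (fun τ => ((Φ τ).det)⁻¹ • (Φ τ).adjugate) I := by
      refine ContinuousOn.smul (hdet.inv₀ fun τ hτ => ?_) hadj
      exact ((Matrix.isUnit_iff_isUnit_det _).1 (hΦinv τ hτ)).ne_zero
    refine hsmul.congr fun τ hτ => ?_
    rw [Matrix.inv_def, Ring.inverse_eq_inv']
  have hGc : ContinuousOn Gm I := by
    have hΘc : ContinuousOn (fun τ => Φ t1 * (Φ τ)⁻¹) I :=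
      (continuous_const.matrix_mul continuous_id).comp_continuousOn hΨc
    exact (continuous_fst.matrix_mul continuous_snd).comp_continuousOn (hΘc.prodMk hB)
  have hwc : ContinuousOn w I :=
    ((continuous_id.matrix_transpose).matrix_mulVec continuous_const).comp_continuousOn hGc
  have hΓdet : IsUnit Γ.det := (Matrix.isUnit_iff_isUnit_det _).1 hΓ.isUnit
  have hΓξ : Γ *ᵥ cvec = ξ := by
    rw [hcvec, Matrix.mulVec_mulVec, Matrix.mul_nonsing_inv _ hΓdet, Matrix.one_mulVec]
  -- the Gramian as an integral of `Gm τ * (Gm τ)ᵀ`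
  have hΓ2 : Γ = ∫ τ in t0..t1, Gm τ * (Gm τ)ᵀ := by
    rw [hΓdef]
    refine intervalIntegral.integral_congr fun τ _ => ?_
    simp [hGm, Matrix.transpose_mul, Matrix.mul_assoc]
  have hGGc : ContinuousOn (fun τ => Gm τ * (Gm τ)ᵀ) I :=
    (continuous_fst.matrix_mul continuous_snd.matrix_transpose).comp_continuousOn (hGc.prodMk hGc)
  have hGwc : ContinuousOn (fun τ => Gm τ *ᵥ w τ) I :=
    (continuous_fst.matrix_mulVec continuous_snd).comp_continuousOn (hGc.prodMk hwc)
  have hGw : (∫ τ in t0..t1, Gm τ *ᵥ w τ) = ξ := by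
    have e1 : (∫ τ in t0..t1, Gm τ *ᵥ w τ)
        = ∫ τ in t0..t1, (Gm τ * (Gm τ)ᵀ) *ᵥ cvec := by
      refine intervalIntegral.integral_congr fun τ _ => ?_
      rw [hw, Matrix.mulVec_mulVec]
    have e2 : (∫ τ in t0..t1, (Gm τ * (Gm τ)ᵀ) *ᵥ cvec)
        = (∫ τ in t0..t1, Gm τ * (Gm τ)ᵀ) *ᵥ cvec := by
      have := (stmt16_matApplyCLM (a := n) cvec).intervalIntegral_comp_comm
        (stmt16_intInt hle hGGc)
      exact this
    rw [e1, e2, ← hΓ2, hΓξ]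
  have hdotw : ∀ (vv : Fin m → ℝ) (τ : ℝ), vv ⬝ᵥ w τ = (Gm τ *ᵥ vv) ⬝ᵥ cvec := by
    intro vv τ
    rw [hw, Matrix.dotProduct_mulVec, Matrix.vecMul_transpose]
  have hww : (∫ τ in t0..t1, w τ ⬝ᵥ w τ) = ξ ⬝ᵥ cvec := by
    have e1 : (∫ τ in t0..t1, w τ ⬝ᵥ w τ) = ∫ τ in t0..t1, cvec ⬝ᵥ (Gm τ *ᵥ w τ) := by
      refine intervalIntegral.integral_congr fun τ _ => ?_
      rw [hdotw (w τ) τ, dotProduct_comm]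
    have e2 : (∫ τ in t0..t1, cvec ⬝ᵥ (Gm τ *ᵥ w τ)) = cvec ⬝ᵥ (∫ τ in t0..t1, Gm τ *ᵥ w τ) := by
      have := (stmt16_dotCLM cvec).intervalIntegral_comp_comm (stmt16_intInt hle hGwc)
      simpa [stmt16_dotCLM] using this
    rw [e1, e2, hGw, dotProduct_comm]
  -- construction of trajectories from controls
  have construct : ∀ v : ℝ → Fin m → ℝ, ContinuousOn v I →
      ∃ z : ℝ → Fin n → ℝ,
        (∀ τ ∈ I, HasDerivWithinAt z (Ahat τ *ᵥ z τ + B τ *ᵥ v τ) I τ) ∧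
        z t0 = x ∧ z t1 = Φ t1 *ᵥ x + ∫ τ in t0..t1, Gm τ *ᵥ v τ := by
    intro v hvc
    set p : ℝ → Fin n → ℝ := fun s => (Φ s)⁻¹ *ᵥ (B s *ᵥ v s) with hp
    have hpc : ContinuousOn p I := by
      have hBv : ContinuousOn (fun s => B s *ᵥ v s) I :=
        (continuous_fst.matrix_mulVec continuous_snd).comp_continuousOn (hB.prodMk hvc)
      exact (continuous_fst.matrix_mulVec continuous_snd).comp_continuousOn (hΨc.prodMk hBv)
    refine ⟨fun τ => Φ τ *ᵥ (x + ∫ s in t0..τ, p s), ?_, ?_, ?_⟩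
    · intro τ hτ
      have hu : HasDerivWithinAt (fun r => ∫ s in t0..r, p s) (p τ) I τ := stmt16_ftc p hpc hτ
      have hd := stmt16_hdw_mulVec (hΦ τ hτ)
        ((hasDerivWithinAt_const τ I x).fun_add hu)
      have hdet : IsUnit (Φ τ).det := (Matrix.isUnit_iff_isUnit_det _).1 (hΦinv τ hτ)
      have h1 : Φ τ *ᵥ (0 + p τ) = B τ *ᵥ v τ := by
        rw [zero_add, hp, Matrix.mulVec_mulVec, Matrix.mul_nonsing_inv _ hdet,
          Matrix.one_mulVec]
      have h2 : (Ahat τ * Φ τ) *ᵥ (x + ∫ s in t0..τ, p s)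
          = Ahat τ *ᵥ (Φ τ *ᵥ (x + ∫ s in t0..τ, p s)) := by
        rw [Matrix.mulVec_mulVec]
      rw [h1, h2] at hd
      exact hd
    · simp [intervalIntegral.integral_same, hΦ0, Matrix.one_mulVec]
    · show Φ t1 *ᵥ (x + ∫ s in t0..t1, p s) = _
      rw [Matrix.mulVec_add]
      congr 1
      have hswap := (stmt16_mulVecCLM (Φ t1)).intervalIntegral_comp_comm
        (stmt16_intInt hle hpc)
      have e1 : Φ t1 *ᵥ (∫ s in t0..t1, p s) = ∫ s in t0..t1, Φ t1 *ᵥ p s := by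
        simpa [stmt16_mulVecCLM] using hswap.symm
      rw [e1]
      refine intervalIntegral.integral_congr fun s _ => ?_
      simp only [hp, hGm, Matrix.mulVec_mulVec, Matrix.mul_assoc]
  constructor
  · -- membership: the optimal control
    obtain ⟨z, hzode, hz0, hz1⟩ := construct (fun τ => -(w τ)) hwc.neg
    refine ⟨z, fun τ => -(w τ), hwc.neg, hzode, hz0, ?_, ?_⟩
    · rw [hz1]
      have e1 : (∫ τ in t0..t1, Gm τ *ᵥ (-(w τ))) = -∫ τ in t0..t1, Gm τ *ᵥ w τ := by
        rw [← intervalIntegral.integral_neg]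
        exact intervalIntegral.integral_congr fun τ _ => by rw [Matrix.mulVec_neg]
      rw [e1, hGw, hξ]
      abel
    · have e1 : (∫ τ in t0..t1, (1/2 : ℝ) * ((-(w τ)) ⬝ᵥ (-(w τ))))
          = ∫ τ in t0..t1, (1/2 : ℝ) * (w τ ⬝ᵥ w τ) := by
        refine intervalIntegral.integral_congr fun τ _ => ?_
        rw [neg_dotProduct, dotProduct_neg, neg_neg]
      rw [e1, intervalIntegral.integral_const_mul, hww]
  · -- lower bound
    rintro E ⟨z, v, hvc, hzode, hz0, hz1, hE⟩
    obtain ⟨q, hqode, hq0, hq1⟩ := construct v hvc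
    have heq : Set.EqOn z q I :=
      stmt16_ode_unique hle hA (fun τ => B τ *ᵥ v τ) hzode hqode (hz0.trans hq0.symm)
    have hT : (∫ τ in t0..t1, Gm τ *ᵥ v τ) = -ξ := by
      have h1 : y = Φ t1 *ᵥ x + ∫ τ in t0..t1, Gm τ *ᵥ v τ := by
        rw [← hz1, heq ht1mem, hq1]
      rw [hξ]
      rw [h1]
      abel
    have hGvc : ContinuousOn (fun τ => Gm τ *ᵥ v τ) I :=
      (continuous_fst.matrix_mulVec continuous_snd).comp_continuousOn (hGc.prodMk hvc)
    have hvw : (∫ τ in t0..t1, v τ ⬝ᵥ w τ) = -(ξ ⬝ᵥ cvec) := by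
      have e1 : (∫ τ in t0..t1, v τ ⬝ᵥ w τ) = ∫ τ in t0..t1, cvec ⬝ᵥ (Gm τ *ᵥ v τ) := by
        refine intervalIntegral.integral_congr fun τ _ => ?_
        rw [hdotw (v τ) τ, dotProduct_comm]
      have e2 : (∫ τ in t0..t1, cvec ⬝ᵥ (Gm τ *ᵥ v τ)) = cvec ⬝ᵥ (∫ τ in t0..t1, Gm τ *ᵥ v τ) := by
        have := (stmt16_dotCLM cvec).intervalIntegral_comp_comm (stmt16_intInt hle hGvc)
        simpa [stmt16_dotCLM] using this
      rw [e1, e2, hT, dotProduct_neg, dotProduct_comm]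
    -- integrabilities
    have Ivv : IntervalIntegrable (fun τ => v τ ⬝ᵥ v τ) volume t0 t1 :=
      stmt16_intInt hle
        ((continuous_fst.dotProduct continuous_snd).comp_continuousOn (hvc.prodMk hvc))
    have Ivw : IntervalIntegrable (fun τ => v τ ⬝ᵥ w τ) volume t0 t1 :=
      stmt16_intInt hle
        ((continuous_fst.dotProduct continuous_snd).comp_continuousOn (hvc.prodMk hwc))
    have Iww : IntervalIntegrable (fun τ => w τ ⬝ᵥ w τ) volume t0 t1 :=
      stmt16_intInt hle
        ((continuous_fst.dotProduct continuous_snd).comp_continuousOn (hwc.prodMk hwc))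
    have h0 : (0:ℝ) ≤ ∫ τ in t0..t1, ((v τ + w τ) ⬝ᵥ (v τ + w τ)) := by
      refine intervalIntegral.integral_nonneg hle fun u _ => ?_
      exact Finset.sum_nonneg fun i _ => mul_self_nonneg _
    have hexpand : (∫ τ in t0..t1, ((v τ + w τ) ⬝ᵥ (v τ + w τ)))
        = (∫ τ in t0..t1, v τ ⬝ᵥ v τ) + (2:ℝ) * (∫ τ in t0..t1, v τ ⬝ᵥ w τ)
          + ∫ τ in t0..t1, w τ ⬝ᵥ w τ := by
      have e1 : (∫ τ in t0..t1, ((v τ + w τ) ⬝ᵥ (v τ + w τ)))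
          = ∫ τ in t0..t1, (v τ ⬝ᵥ v τ + 2 * (v τ ⬝ᵥ w τ) + w τ ⬝ᵥ w τ) := by
        refine intervalIntegral.integral_congr fun τ _ => ?_
        have hc : w τ ⬝ᵥ v τ = v τ ⬝ᵥ w τ := dotProduct_comm _ _
        rw [add_dotProduct, dotProduct_add, dotProduct_add, hc]
        ring
      rw [e1, intervalIntegral.integral_add (Ivv.add ((Ivw.const_mul 2)))
        Iww, intervalIntegral.integral_add Ivv (Ivw.const_mul 2),
        intervalIntegral.integral_const_mul]
    have hkey : ξ ⬝ᵥ cvec ≤ ∫ τ in t0..t1, v τ ⬝ᵥ v τ := by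
      rw [hexpand, hvw, hww] at h0
      linarith
    have hEeq : E = (1/2 : ℝ) * ∫ τ in t0..t1, v τ ⬝ᵥ v τ := by
      rw [hE, intervalIntegral.integral_const_mul]
    rw [hEeq]
    linarith
end
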